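/- Let z_1,…,z_n and w_1,…,w_n be spinors in ℂ². Then the determinant of the 4×4 complex matrix with 2×2 blocks [[1₂, Σᵢ |z_i⟩[w_i|], [−Σᵢ |w_i⟩[z_i|, 1₂]] equals (1 + Σ_{i<j} [w_i|w_j⟩[z_j|z_i⟩)². (This is the evaluation det(1+X) for the theta graph Θ_n with n edges from a vertex carrying the z_i to a vertex carrying the w_i, giving the coherent amplitude A_{Θ_n}(z_i,w_i) = (1 + Σ_{i<j}[w_i|w_j⟩[z_j|z_i⟩)^{−2}.) -/

import Mathlib

namespace SpinNetworks

noncomputable section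

open Matrix BigOperators

/-- A spinor `z = (α,β)ᵀ ∈ ℂ²`. -/
abbrev Spinor : Type := Fin 2 → ℂ

/-- The antisymmetric holomorphic bracket `[z|w⟩ = α_z β_w − α_w β_z`. -/
def bracket (z w : Spinor) : ℂ := z 0 * w 1 - w 0 * z 1

/-- The covector `[w| = (−β_w, α_w)`. -/
def braVec (w : Spinor) : Spinor := ![-(w 1), w 0]

/-- The 2×2 matrix `|z⟩[w|`. -/
def ketBra (z w : Spinor) : Matrix (Fin 2) (Fin 2) ℂ := Matrix.vecMulVec z (braVec w)

/-! ### Auxiliary lemmas -/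

@[simp] lemma ketBra_apply (z w : Spinor) (a b : Fin 2) :
    ketBra z w a b = z a * braVec w b := rfl

@[simp] lemma braVec_zero (w : Spinor) : braVec w 0 = -(w 1) := rfl
@[simp] lemma braVec_one (w : Spinor) : braVec w 1 = w 0 := rfl

/-- The "mixed" bilinear term in the expansion of a 2×2 determinant of a sum. -/
def mixd (A B : Matrix (Fin 2) (Fin 2) ℂ) : ℂ :=
  A 0 0 * B 1 1 + B 0 0 * A 1 1 - A 0 1 * B 1 0 - B 0 1 * A 1 0

lemma det_add_two (A B : Matrix (Fin 2) (Fin 2) ℂ) :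
    (A + B).det = A.det + B.det + mixd A B := by
  simp only [Matrix.det_fin_two, mixd, Matrix.add_apply]; ring

lemma mixd_add_left (A A' B : Matrix (Fin 2) (Fin 2) ℂ) :
    mixd (A + A') B = mixd A B + mixd A' B := by
  simp only [mixd, Matrix.add_apply]; ring

lemma mixd_sum_left {ι : Type*} (s : Finset ι) (f : ι → Matrix (Fin 2) (Fin 2) ℂ)
    (B : Matrix (Fin 2) (Fin 2) ℂ) :
    mixd (∑ i ∈ s, f i) B = ∑ i ∈ s, mixd (f i) B := by
  classical
  induction s using Finset.induction with
  | empty => simp [mixd]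
  | @insert _ _ h ih => rw [Finset.sum_insert h, mixd_add_left, ih, Finset.sum_insert h]

lemma det_ketBra (z w : Spinor) : (ketBra z w).det = 0 := by
  simp only [Matrix.det_fin_two, ketBra_apply, braVec_zero, braVec_one]; ring

lemma mixd_ketBra (x y p q : Spinor) :
    mixd (ketBra x y) (ketBra p q) = bracket x p * bracket y q := by
  simp only [mixd, bracket, ketBra_apply, braVec_zero, braVec_one]; ring

/-- `2 * det (∑ |uᵢ⟩[vᵢ|) = ∑ᵢⱼ [uᵢ|uⱼ⟩[vᵢ|vⱼ⟩` over a finset. -/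
lemma two_det_sum_ketBra {ι : Type*} (s : Finset ι) (u v : ι → Spinor) :
    2 * (∑ i ∈ s, ketBra (u i) (v i)).det
      = ∑ i ∈ s, ∑ j ∈ s, bracket (u i) (u j) * bracket (v i) (v j) := by
  classical
  induction s using Finset.induction with
  | empty => simp [Matrix.det_fin_two]
  | @insert a s ha ih =>
    rw [Finset.sum_insert ha, add_comm, det_add_two, det_ketBra, add_zero,
      mixd_sum_left]
    simp_rw [mixd_ketBra]
    rw [Finset.sum_insert ha]
    simp_rw [Finset.sum_insert ha]
    have hba : bracket (u a) (u a) * bracket (v a) (v a) = 0 := by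
      simp only [bracket]; ring
    have hsym : ∀ i, bracket (u a) (u i) * bracket (v a) (v i)
        = bracket (u i) (u a) * bracket (v i) (v a) := by
      intro i; simp only [bracket]; ring
    rw [mul_add, ih, hba, Finset.sum_add_distrib]
    simp_rw [hsym]
    ring

lemma det_one_add_two (P : Matrix (Fin 2) (Fin 2) ℂ) :
    (1 + P).det = 1 + (P 0 0 + P 1 1) + P.det := by
  simp only [Matrix.det_fin_two, Matrix.add_apply, Matrix.one_apply]
  norm_num; ring

lemma sym_double_sum {n : ℕ} (g : Fin n → Fin n → ℂ) (hdiag : ∀ i, g i i = 0)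
    (hsymm : ∀ i j, g j i = g i j) :
    ∑ i : Fin n, ∑ j : Fin n, g i j = 2 * ∑ i : Fin n, ∑ j ∈ Finset.Ioi i, g i j := by
  have h1 := Finset.sum_sum_Ioi_add_eq_sum_sum_off_diag (f := g)
  have h2 : ∀ i : Fin n, ∑ j : Fin n, g i j = ∑ j ∈ ({i}ᶜ : Finset (Fin n)), g j i := by
    intro i
    rw [← Finset.sum_compl_add_sum ({i} : Finset (Fin n)) (g i)]
    rw [Finset.sum_singleton, hdiag i, add_zero]
    exact Finset.sum_congr rfl fun j _ => (hsymm i j).symm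
  calc ∑ i : Fin n, ∑ j : Fin n, g i j
      = ∑ i : Fin n, ∑ j ∈ ({i}ᶜ : Finset (Fin n)), g j i :=
        Finset.sum_congr rfl fun i _ => h2 i
    _ = ∑ i : Fin n, ∑ j ∈ Finset.Ioi i, (g j i + g i j) := by
        convert h1.symm using 3
    _ = 2 * ∑ i : Fin n, ∑ j ∈ Finset.Ioi i, g i j := by
        rw [Finset.mul_sum]
        refine Finset.sum_congr rfl fun i _ => ?_
        rw [Finset.mul_sum]
        exact Finset.sum_congr rfl fun j _ => by rw [hsymm i j]; ring

/-- for the theta graph `Θ_n` with spinors `z_i` at the first vertex and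
`w_i` at the second, the determinant of the 4×4 block matrix
`[[1₂, Σᵢ |z_i⟩[w_i|], [−Σᵢ |w_i⟩[z_i|, 1₂]]` equals
`(1 + Σ_{i<j} [w_i|w_j⟩[z_j|z_i⟩)²`; this is `det(1+X)`, so the coherent amplitude is
`A_{Θ_n}(z_i,w_i) = (1 + Σ_{i<j}[w_i|w_j⟩[z_j|z_i⟩)⁻²`. -/
theorem det_theta_graph (n : ℕ) (z w : Fin n → Spinor) :
    (Matrix.fromBlocks (1 : Matrix (Fin 2) (Fin 2) ℂ) (∑ i : Fin n, ketBra (z i) (w i))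
        (-∑ i : Fin n, ketBra (w i) (z i)) (1 : Matrix (Fin 2) (Fin 2) ℂ)).det
      = (1 + ∑ i : Fin n, ∑ j ∈ Finset.Ioi i, bracket (w i) (w j) * bracket (z j) (z i)) ^ 2 := by
  set M : Matrix (Fin 2) (Fin 2) ℂ := ∑ i : Fin n, ketBra (z i) (w i) with hM
  set N : Matrix (Fin 2) (Fin 2) ℂ := ∑ i : Fin n, ketBra (w i) (z i) with hN
  set T : ℂ := ∑ i : Fin n, ∑ j ∈ Finset.Ioi i, bracket (w i) (w j) * bracket (z j) (z i)
    with hT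
  rw [Matrix.det_fromBlocks_one₁₁, Matrix.neg_mul, sub_neg_eq_add, det_one_add_two,
    Matrix.det_mul]
  -- determinants
  have hdetN : 2 * N.det = -(2 * T) := by
    rw [hN, two_det_sum_ketBra,
      sym_double_sum (fun i j => bracket (w i) (w j) * bracket (z i) (z j))
        (fun i => by simp only [bracket]; ring)
        (fun i j => by simp only [bracket]; ring)]
    have hflip : ∀ i j : Fin n, bracket (w i) (w j) * bracket (z i) (z j)
        = -(bracket (w i) (w j) * bracket (z j) (z i)) := by
      intro i j; simp only [bracket]; ring
    simp_rw [hflip, Finset.sum_neg_distrib, mul_neg]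
    rfl
  have hdetM : 2 * M.det = -(2 * T) := by
    rw [hM, two_det_sum_ketBra]
    have := hdetN
    rw [hN, two_det_sum_ketBra] at this
    rw [← this]
    refine Finset.sum_congr rfl fun i _ => Finset.sum_congr rfl fun j _ => ?_
    simp only [bracket]; ring
  have hN' : N.det = -T := by linear_combination hdetN / 2
  have hM' : M.det = -T := by linear_combination hdetM / 2
  -- trace
  have htr : (N * M) 0 0 + (N * M) 1 1 = 2 * T := by
    have expand : ∀ a b : Fin 2, (N * M) a b
        = ∑ i : Fin n, ∑ j : Fin n,
            (w i a * bracket (z i) (z j) * braVec (w j) b) := by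
      intro a b
      rw [hN, hM, Matrix.mul_apply]
      simp_rw [Matrix.sum_apply, ketBra_apply, Finset.sum_mul, Finset.mul_sum]
      rw [Finset.sum_comm]
      refine Finset.sum_congr rfl fun i _ => ?_
      rw [Finset.sum_comm]
      refine Finset.sum_congr rfl fun j _ => ?_
      rw [Fin.sum_univ_two]
      simp only [bracket, braVec_zero, braVec_one]; ring
    rw [expand, expand, ← Finset.sum_add_distrib]
    have key := sym_double_sum (fun i j => bracket (w i) (w j) * bracket (z j) (z i))
      (fun i => by simp only [bracket]; ring)
      (fun i j => by simp only [bracket]; ring)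
    rw [hT, ← key]
    simp_rw [← Finset.sum_add_distrib]
    refine Finset.sum_congr rfl fun i _ => Finset.sum_congr rfl fun j _ => ?_
    simp only [bracket, braVec_zero, braVec_one]; ring
  rw [htr, hN', hM']
  ring

end
end SpinNetworks
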